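/- Let a, b, c be integers with 0 ≤ a, b < c, c ≥ 1. If the tetrahedron T_{a,b,c} is empty, then the open parallelepiped {s(1,0,0) + t(0,1,0) + u(a,b,c) : 0 < s, t, u < 1} contains exactly c − 1 points of ℤ³. -/

import Mathlib

/-- A point of `ℝ³` is a lattice point if all of its coordinates are integers. -/
def IsLatticePt (x : Fin 3 → ℝ) : Prop := ∀ i, ∃ m : ℤ, x i = (m : ℝ)

/-- The tetrahedron `T_{a,b,c}`: the convex hull of `(0,0,0)`, `(1,0,0)`, `(0,1,0)`, `(a,b,c)`. -/
def Tet (a b c : ℤ) : Set (Fin 3 → ℝ) :=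
  convexHull ℝ {![0,0,0], ![1,0,0], ![0,1,0], ![(a : ℝ), (b : ℝ), (c : ℝ)]}

/-- `T_{a,b,c}` is an empty lattice tetrahedron: it contains no point of `ℤ³`
other than its four vertices. -/
def TetIsEmpty (a b c : ℤ) : Prop :=
  ∀ x ∈ Tet a b c, IsLatticePt x →
    x = ![0,0,0] ∨ x = ![1,0,0] ∨ x = ![0,1,0] ∨ x = ![(a : ℝ), (b : ℝ), (c : ℝ)]

/-- The closed parallelepiped `P_{a,b,c}` spanned by `(1,0,0)`, `(0,1,0)`, `(a,b,c)`. -/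
def Par (a b c : ℤ) : Set (Fin 3 → ℝ) :=
  {x | ∃ s t u : ℝ, 0 ≤ s ∧ s ≤ 1 ∧ 0 ≤ t ∧ t ≤ 1 ∧ 0 ≤ u ∧ u ≤ 1 ∧
    x = s • ![1, 0, 0] + t • ![0, 1, 0] + u • ![(a : ℝ), (b : ℝ), (c : ℝ)]}

/-- The open parallelepiped spanned by `(1,0,0)`, `(0,1,0)`, `(a,b,c)`. -/
def OpenPar (a b c : ℤ) : Set (Fin 3 → ℝ) :=
  {x | ∃ s t u : ℝ, 0 < s ∧ s < 1 ∧ 0 < t ∧ t < 1 ∧ 0 < u ∧ u < 1 ∧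
    x = s • ![1, 0, 0] + t • ![0, 1, 0] + u • ![(a : ℝ), (b : ℝ), (c : ℝ)]}

lemma vec_eval (s t u : ℝ) (a b c : ℤ) :
    s • ![(1:ℝ),0,0] + t • ![0,1,0] + u • ![(a:ℝ),(b:ℝ),(c:ℝ)]
      = ![s + u*a, t + u*b, u*c] := by
  funext i
  fin_cases i <;> simp

lemma mem_tet (a b c : ℤ) (α β γ : ℝ) (hα : 0 ≤ α) (hβ : 0 ≤ β) (hγ : 0 ≤ γ)
    (hs : α + β + γ ≤ 1) :
    α • ![(1:ℝ),0,0] + β • ![0,1,0] + γ • ![(a:ℝ),(b:ℝ),(c:ℝ)] ∈ Tet a b c := by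
  set v : Fin 4 → (Fin 3 → ℝ) := ![![0,0,0], ![1,0,0], ![0,1,0], ![(a:ℝ),(b:ℝ),(c:ℝ)]] with hv
  set w : Fin 4 → ℝ := ![1 - α - β - γ, α, β, γ] with hw
  have hw0 : ∀ i ∈ Finset.univ, 0 ≤ w i := by
    intro i _
    fin_cases i <;> simp [hw] <;> linarith
  have hw1 : ∑ i, w i = 1 := by
    simp [hw, Fin.sum_univ_four]; ring
  have hz : ∀ i ∈ Finset.univ, v i ∈
      ({![0,0,0], ![1,0,0], ![0,1,0], ![(a:ℝ),(b:ℝ),(c:ℝ)]} : Set (Fin 3 → ℝ)) := by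
    intro i _
    fin_cases i <;> simp [hv]
  have hmem := Finset.centerMass_mem_convexHull Finset.univ hw0 (by rw [hw1]; norm_num) hz
  rw [Finset.centerMass_eq_of_sum_1 _ _ hw1] at hmem
  rw [Fin.sum_univ_four] at hmem
  have h0 : w 0 • v 0 = 0 := by
    have : v 0 = (0 : Fin 3 → ℝ) := by funext i; fin_cases i <;> simp [hv]
    rw [this, smul_zero]
  rw [h0, zero_add] at hmem
  convert hmem using 2 <;> rfl

/-- A lattice point in the tetrahedron whose third coordinate lies strictly between
`0` and `c` gives a contradiction with emptiness. -/
lemma aux_a (a b c k : ℤ) (hempty : TetIsEmpty a b c) (hk0 : 0 < k) (hkc : k < c)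
    (hdvd : c ∣ k * a) (hkr : (-(k*b)) % c + k ≤ c) : False := by
  have hc0 : (0:ℤ) < c := lt_trans hk0 hkc
  have hcR : (0:ℝ) < (c:ℝ) := by exact_mod_cast hc0
  set r : ℤ := (-(k*b)) % c with hr
  have hr0 : 0 ≤ r := Int.emod_nonneg _ (ne_of_gt hc0)
  set β : ℝ := (r:ℝ)/c with hβ
  set γ : ℝ := (k:ℝ)/c with hγ
  set P := (0:ℝ) • ![(1:ℝ),0,0] + β • ![0,1,0] + γ • ![(a:ℝ),(b:ℝ),(c:ℝ)] with hP
  have hPmem : P ∈ Tet a b c := by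
    apply mem_tet a b c 0 β γ le_rfl (by positivity) (by positivity)
    rw [hβ, hγ, zero_add, ← add_div, div_le_one hcR]
    exact_mod_cast hkr
  have hPval : P = ![(0:ℝ) + γ*a, β + γ*b, γ*c] := by
    rw [hP, vec_eval]
  obtain ⟨m, hm⟩ := hdvd
  have hma : γ * a = (m:ℝ) := by
    rw [hγ]; field_simp
    rw [← Int.cast_mul, ← Int.cast_mul, hm]
  have hdvd2 : c ∣ (k*b + r) := by
    rw [hr, Int.emod_def]
    exact ⟨-((-(k*b))/c), by ring⟩
  obtain ⟨n, hn⟩ := hdvd2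
  have hmb : β + γ * b = (n:ℝ) := by
    have h : (r:ℝ) + (k:ℝ)*(b:ℝ) = (n:ℝ)*(c:ℝ) := by
      exact_mod_cast (show r + k*b = n*c by linarith)
    rw [hβ, hγ]; field_simp; linarith
  have hmc : γ * c = (k:ℝ) := by rw [hγ]; field_simp
  have hlat : IsLatticePt P := by
    intro i
    fin_cases i
    · exact ⟨m, by rw [hPval]; simpa using hma⟩
    · exact ⟨n, by rw [hPval]; simpa using hmb⟩
    · exact ⟨k, by rw [hPval]; simpa using hmc⟩
  have h2 : P 2 = (k:ℝ) := by rw [hPval]; simpa using hmc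
  have hk0R : (0:ℝ) < (k:ℝ) := by exact_mod_cast hk0
  have hkcR : (k:ℝ) < (c:ℝ) := by exact_mod_cast hkc
  rcases hempty P hPmem hlat with h | h | h | h <;>
    · have := congrFun h 2
      rw [h2] at this
      simp at this
      linarith

/-- Symmetric variant of `aux_a`, with the roles of the first two coordinates swapped. -/
lemma aux_b (a b c k : ℤ) (hempty : TetIsEmpty a b c) (hk0 : 0 < k) (hkc : k < c)
    (hdvd : c ∣ k * b) (hkr : (-(k*a)) % c + k ≤ c) : False := by
  have hc0 : (0:ℤ) < c := lt_trans hk0 hkc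
  have hcR : (0:ℝ) < (c:ℝ) := by exact_mod_cast hc0
  set r : ℤ := (-(k*a)) % c with hr
  have hr0 : 0 ≤ r := Int.emod_nonneg _ (ne_of_gt hc0)
  set α : ℝ := (r:ℝ)/c with hα
  set γ : ℝ := (k:ℝ)/c with hγ
  set P := α • ![(1:ℝ),0,0] + (0:ℝ) • ![0,1,0] + γ • ![(a:ℝ),(b:ℝ),(c:ℝ)] with hP
  have hPmem : P ∈ Tet a b c := by
    apply mem_tet a b c α 0 γ (by positivity) le_rfl (by positivity)
    rw [hα, hγ, add_zero, ← add_div, div_le_one hcR]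
    exact_mod_cast hkr
  have hPval : P = ![α + γ*a, (0:ℝ) + γ*b, γ*c] := by
    rw [hP, vec_eval]
  obtain ⟨m, hm⟩ := hdvd
  have hmb : (0:ℝ) + γ * b = (m:ℝ) := by
    rw [hγ]; field_simp
    rw [← Int.cast_mul, ← Int.cast_mul, hm]; ring_nf
  have hdvd2 : c ∣ (k*a + r) := by
    rw [hr, Int.emod_def]
    exact ⟨-((-(k*a))/c), by ring⟩
  obtain ⟨n, hn⟩ := hdvd2
  have hma : α + γ * a = (n:ℝ) := by
    have h : (r:ℝ) + (k:ℝ)*(a:ℝ) = (n:ℝ)*(c:ℝ) := by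
      exact_mod_cast (show r + k*a = n*c by linarith)
    rw [hα, hγ]; field_simp; linarith
  have hmc : γ * c = (k:ℝ) := by rw [hγ]; field_simp
  have hlat : IsLatticePt P := by
    intro i
    fin_cases i
    · exact ⟨n, by rw [hPval]; simpa using hma⟩
    · exact ⟨m, by rw [hPval]; simpa using hmb⟩
    · exact ⟨k, by rw [hPval]; simpa using hmc⟩
  have h2 : P 2 = (k:ℝ) := by rw [hPval]; simpa using hmc
  have hk0R : (0:ℝ) < (k:ℝ) := by exact_mod_cast hk0
  have hkcR : (k:ℝ) < (c:ℝ) := by exact_mod_cast hkc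
  rcases hempty P hPmem hlat with h | h | h | h <;>
    · have := congrFun h 2
      rw [h2] at this
      simp at this
      linarith

lemma neg_emod' (x c : ℤ) (hc : 0 < c) (hx : 0 < x % c) : (-x) % c = c - x % c := by
  have hlt : x % c < c := Int.emod_lt_of_pos _ hc
  have hxe : -x = c - x % c + c * (-(x/c) - 1) := by
    rw [Int.emod_def]; ring
  rw [hxe, Int.add_mul_emod_self_left]
  exact Int.emod_eq_of_lt (by omega) (by omega)

lemma key_a (a b c : ℤ) (hempty : TetIsEmpty a b c) (hc0 : 0 < c) (k : ℤ)
    (hk0 : 0 < k) (hkc : k < c) : ¬ c ∣ k * a := by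
  intro hdvd
  set r := (k*b) % c with hr
  have hrlt : r < c := Int.emod_lt_of_pos _ hc0
  have hr0 : 0 ≤ r := Int.emod_nonneg _ hc0.ne'
  by_cases hle : k ≤ r
  · have hmod : (-(k*b)) % c = c - r := neg_emod' _ _ hc0 (by omega)
    exact aux_a a b c k hempty hk0 hkc hdvd (by omega)
  · push_neg at hle
    have hdvd' : c ∣ (c-k)*a := by
      have h1 : (c-k)*a = c*a - k*a := by ring
      rw [h1]
      exact dvd_sub (Dvd.intro _ rfl) hdvd
    have hmod : (-((c-k)*b)) % c = r := by
      have h2 : -((c-k)*b) ≡ k*b [ZMOD c] := by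
        rw [Int.modEq_iff_dvd]
        exact ⟨b, by ring⟩
      exact h2
    exact aux_a a b c (c-k) hempty (by omega) (by omega) hdvd' (by omega)

lemma key_b (a b c : ℤ) (hempty : TetIsEmpty a b c) (hc0 : 0 < c) (k : ℤ)
    (hk0 : 0 < k) (hkc : k < c) : ¬ c ∣ k * b := by
  intro hdvd
  set r := (k*a) % c with hr
  have hrlt : r < c := Int.emod_lt_of_pos _ hc0
  have hr0 : 0 ≤ r := Int.emod_nonneg _ hc0.ne'
  by_cases hle : k ≤ r
  · have hmod : (-(k*a)) % c = c - r := neg_emod' _ _ hc0 (by omega)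
    exact aux_b a b c k hempty hk0 hkc hdvd (by omega)
  · push_neg at hle
    have hdvd' : c ∣ (c-k)*b := by
      have h1 : (c-k)*b = c*b - k*b := by ring
      rw [h1]
      exact dvd_sub (Dvd.intro _ rfl) hdvd
    have hmod : (-((c-k)*a)) % c = r := by
      have h2 : -((c-k)*a) ≡ k*a [ZMOD c] := by
        rw [Int.modEq_iff_dvd]
        exact ⟨a, by ring⟩
      exact h2
    exact aux_b a b c (c-k) hempty (by omega) (by omega) hdvd' (by omega)

set_option maxHeartbeats 1000000 in
/-- If `0 ≤ a, b < c`, `c ≥ 1`, and the tetrahedron `T_{a,b,c}` is empty, then the open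
parallelepiped `{s(1,0,0) + t(0,1,0) + u(a,b,c) : 0 < s, t, u < 1}` contains exactly
`c - 1` points of `ℤ³`. -/
theorem stmt_3 (a b c : ℤ) (ha : 0 ≤ a) (hac : a < c) (hb : 0 ≤ b) (hbc : b < c)
    (hc : 1 ≤ c) (hempty : TetIsEmpty a b c) :
    {x : Fin 3 → ℝ | x ∈ OpenPar a b c ∧ IsLatticePt x}.ncard = (c - 1).toNat := by
  have hc0 : (0:ℤ) < c := hc
  have hcR : (0:ℝ) < (c:ℝ) := by exact_mod_cast hc0
  set F : ℤ → (Fin 3 → ℝ) :=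
    fun k => ![((k*a/c + 1 : ℤ) : ℝ), ((k*b/c + 1 : ℤ) : ℝ), (k : ℝ)] with hF
  have hset : {x : Fin 3 → ℝ | x ∈ OpenPar a b c ∧ IsLatticePt x} = F '' (Set.Ioo 0 c) := by
    ext x
    simp only [Set.mem_setOf_eq, Set.mem_image, Set.mem_Ioo]
    constructor
    · rintro ⟨⟨s, t, u, hs0, hs1, ht0, ht1, hu0, hu1, hx⟩, hlat⟩
      rw [vec_eval] at hx
      obtain ⟨m0, hm0⟩ := hlat 0
      obtain ⟨m1, hm1⟩ := hlat 1
      obtain ⟨m2, hm2⟩ := hlat 2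
      rw [hx] at hm0 hm1 hm2
      simp only [Matrix.cons_val_zero, Matrix.cons_val_one, Matrix.head_cons,
        Matrix.cons_val_two, Matrix.tail_cons] at hm0 hm1 hm2
      have hm2pos : (0:ℤ) < m2 := by
        have : (0:ℝ) < (m2:ℝ) := by rw [← hm2]; positivity
        exact_mod_cast this
      have hm2lt : m2 < c := by
        have : (m2:ℝ) < (c:ℝ) := by rw [← hm2]; nlinarith
        exact_mod_cast this
      refine ⟨m2, ⟨hm2pos, hm2lt⟩, ?_⟩
      have hu : u = (m2:ℝ)/c := by field_simp; linarith
      rw [hu] at hm0 hm1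
      have hm0c : s*c + (m2:ℝ)*a = (m0:ℝ)*c := by
        field_simp at hm0; linarith
      have hm1c : t*c + (m2:ℝ)*b = (m1:ℝ)*c := by
        field_simp at hm1; linarith
      have hsc := mul_lt_mul_of_pos_right hs1 hcR
      have hsc' := mul_pos hs0 hcR
      have htc := mul_lt_mul_of_pos_right ht1 hcR
      have htc' := mul_pos ht0 hcR
      have hb0 : c*(m0-1) < m2*a ∧ m2*a < c*m0 := by
        constructor
        · have : ((c*(m0-1)):ℝ) < ((m2*a):ℝ) := by push_cast; nlinarith
          exact_mod_cast this
        · have : ((m2*a):ℝ) < ((c*m0):ℝ) := by push_cast; nlinarith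
          exact_mod_cast this
      have hdiv0 : m2*a/c = m0 - 1 := by
        have h1 : m0 - 1 ≤ m2*a/c := by
          rw [Int.le_ediv_iff_mul_le hc0]; nlinarith [hb0.1]
        have h2 : m2*a/c < m0 := by
          rw [Int.ediv_lt_iff_lt_mul hc0]; nlinarith [hb0.2]
        omega
      have hb1 : c*(m1-1) < m2*b ∧ m2*b < c*m1 := by
        constructor
        · have : ((c*(m1-1)):ℝ) < ((m2*b):ℝ) := by push_cast; nlinarith
          exact_mod_cast this
        · have : ((m2*b):ℝ) < ((c*m1):ℝ) := by push_cast; nlinarith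
          exact_mod_cast this
      have hdiv1 : m2*b/c = m1 - 1 := by
        have h1 : m1 - 1 ≤ m2*b/c := by
          rw [Int.le_ediv_iff_mul_le hc0]; nlinarith [hb1.1]
        have h2 : m2*b/c < m1 := by
          rw [Int.ediv_lt_iff_lt_mul hc0]; nlinarith [hb1.2]
        omega
      have hm0' : m2*a/c + 1 = m0 := by omega
      have hm1' : m2*b/c + 1 = m1 := by omega
      have e0 : s + u*(a:ℝ) = ((m2*a/c + 1 : ℤ):ℝ) := by
        rw [hm0', hu]; exact hm0
      have e1 : t + u*(b:ℝ) = ((m2*b/c + 1 : ℤ):ℝ) := by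
        rw [hm1', hu]; exact hm1
      rw [hx, hF]
      symm
      show ![s + u*(a:ℝ), t + u*(b:ℝ), u*(c:ℝ)]
          = ![((m2*a/c + 1 : ℤ):ℝ), ((m2*b/c + 1 : ℤ):ℝ), ((m2:ℤ):ℝ)]
      rw [e0, e1, hm2]
    · rintro ⟨k, ⟨hk0, hkc⟩, hFk⟩
      have hnda : ¬ c ∣ k*a := key_a a b c hempty hc0 k hk0 hkc
      have hndb : ¬ c ∣ k*b := key_b a b c hempty hc0 k hk0 hkc
      set ra := k*a % c with hra
      set rb := k*b % c with hrb
      have hra0 : 0 < ra :=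
        lt_of_le_of_ne (Int.emod_nonneg _ hc0.ne')
          (fun h => hnda (Int.dvd_of_emod_eq_zero h.symm))
      have hralt : ra < c := Int.emod_lt_of_pos _ hc0
      have hrb0 : 0 < rb :=
        lt_of_le_of_ne (Int.emod_nonneg _ hc0.ne')
          (fun h => hndb (Int.dvd_of_emod_eq_zero h.symm))
      have hrblt : rb < c := Int.emod_lt_of_pos _ hc0
      have hraR : (0:ℝ) < (ra:ℝ) ∧ (ra:ℝ) < c := by constructor <;> exact_mod_cast (by omega : _)
      have hrbR : (0:ℝ) < (rb:ℝ) ∧ (rb:ℝ) < c := by constructor <;> exact_mod_cast (by omega : _)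
      have hkR : (0:ℝ) < (k:ℝ) ∧ (k:ℝ) < c := by constructor <;> exact_mod_cast (by omega : _)
      set s : ℝ := 1 - (ra:ℝ)/c with hsdef
      set t : ℝ := 1 - (rb:ℝ)/c with htdef
      set u : ℝ := (k:ℝ)/c with hudef
      have hqa : (k:ℝ)*(a:ℝ) = (c:ℝ)*(((k*a/c : ℤ)):ℝ) + (ra:ℝ) := by
        exact_mod_cast congrArg (Int.cast : ℤ → ℝ) (Int.mul_ediv_add_emod (k*a) c).symm
      have hqb : (k:ℝ)*(b:ℝ) = (c:ℝ)*(((k*b/c : ℤ)):ℝ) + (rb:ℝ) := by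
        exact_mod_cast congrArg (Int.cast : ℤ → ℝ) (Int.mul_ediv_add_emod (k*b) c).symm
      have e0 : s + u*(a:ℝ) = ((k*a/c + 1 : ℤ):ℝ) := by
        rw [hsdef, hudef]; push_cast; field_simp; linarith
      have e1 : t + u*(b:ℝ) = ((k*b/c + 1 : ℤ):ℝ) := by
        rw [htdef, hudef]; push_cast; field_simp; linarith
      have e2 : u*(c:ℝ) = (k:ℝ) := by rw [hudef]; field_simp
      have hxval : x = ![s + u*(a:ℝ), t + u*(b:ℝ), u*(c:ℝ)] := by
        rw [← hFk, hF, e0, e1, e2]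
      have hdra : (0:ℝ) < (ra:ℝ)/c ∧ (ra:ℝ)/c < 1 :=
        ⟨div_pos hraR.1 hcR, (div_lt_one hcR).mpr hraR.2⟩
      have hdrb : (0:ℝ) < (rb:ℝ)/c ∧ (rb:ℝ)/c < 1 :=
        ⟨div_pos hrbR.1 hcR, (div_lt_one hcR).mpr hrbR.2⟩
      have hdu : (0:ℝ) < u ∧ u < 1 := by
        rw [hudef]
        exact ⟨div_pos hkR.1 hcR, (div_lt_one hcR).mpr hkR.2⟩
      constructor
      · refine ⟨s, t, u, by rw [hsdef]; linarith [hdra.2], by rw [hsdef]; linarith [hdra.1],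
          by rw [htdef]; linarith [hdrb.2], by rw [htdef]; linarith [hdrb.1],
          hdu.1, hdu.2, ?_⟩
        rw [vec_eval]; exact hxval
      · have hlatF : IsLatticePt (F k) := by
          intro i
          fin_cases i
          · exact ⟨k*a/c + 1, by simp [hF]⟩
          · exact ⟨k*b/c + 1, by simp [hF]⟩
          · exact ⟨k, by simp [hF]⟩
        rw [← hFk]; exact hlatF
  rw [hset]
  rw [Set.ncard_image_of_injOn]
  · rw [← Finset.coe_Ioo, Set.ncard_coe_finset, Int.card_Ioo]
    omega
  · intro p hp q hq h
    have h2 := congrFun h 2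
    simp only [hF, Matrix.cons_val_two, Matrix.tail_cons, Matrix.head_cons] at h2
    exact_mod_cast h2
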